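/- In the two-horizontal-lines setting, for any non-identity permutation π there is a flip corresponding to an adjacent transposition: there exist i < j with π(i) > π(j) such that the segments a_i b_{π(i)} and a_j b_{π(j)} cross, and replacing them by a_i b_{π(j)} and a_j b_{π(i)} yields the matching of the permutation π ∘ (i j), which has strictly fewer inversions. Consequently there is a flip sequence of length inv(π) from the matching of π to the non-crossing matching. -/

import Mathlib

/-- The number of inversions of a permutation `π` of `Fin n`. -/
def inversions {n : ℕ} (π : Equiv.Perm (Fin n)) : ℕ :=
  (Finset.univ.filter fun p : Fin n × Fin n => p.1 < p.2 ∧ π p.2 < π p.1).card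

lemma cross_lemma (a b c d : ℝ) (hac : a < c) (hdb : d < b) :
    (openSegment ℝ ((a, 0) : ℝ × ℝ) ((b, 1) : ℝ × ℝ) ∩
      openSegment ℝ ((c, 0) : ℝ × ℝ) ((d, 1) : ℝ × ℝ)).Nonempty := by
  have huv : (0:ℝ) < (c - a) + (b - d) := by linarith
  set t : ℝ := (c - a) / ((c - a) + (b - d)) with ht
  have ht0 : 0 < t := div_pos (by linarith) huv
  have ht1 : t < 1 := by rw [ht, div_lt_one huv]; linarith
  have h1t : 0 < 1 - t := by linarith
  have key : (1 - t) * c + t * d = (1 - t) * a + t * b := by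
    rw [ht]; field_simp; ring
  refine ⟨((1 - t) * a + t * b, t), ⟨1 - t, t, h1t, ht0, by ring_nf, ?_⟩,
    ⟨1 - t, t, h1t, ht0, by ring_nf, ?_⟩⟩
  · simp only [Prod.smul_mk, Prod.mk_add_mk, smul_eq_mul, Prod.mk.injEq]
    constructor
    · trivial
    · ring
  · simp only [Prod.smul_mk, Prod.mk_add_mk, smul_eq_mul, Prod.mk.injEq]
    constructor
    · linarith [key]
    · ring

lemma swap_lt {n : ℕ} {i j p q : Fin n} (hij : (i : ℕ) + 1 = j) (hpq : p < q)
    (hne : ¬(p = i ∧ q = j)) : Equiv.swap i j p < Equiv.swap i j q := by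
  rw [Fin.lt_def] at hpq ⊢
  rw [not_and] at hne
  simp only [Equiv.swap_apply_def]
  split_ifs with h1 h2 h3 h4 h5 h6 <;>
    first
    | (exfalso; revert hne;
       simp only [Fin.ext_iff] at *; intro hne; omega)
    | (simp only [Fin.ext_iff, Fin.lt_def] at *; omega)

lemma inversions_one {n : ℕ} : inversions (1 : Equiv.Perm (Fin n)) = 0 := by
  rw [inversions, Finset.card_eq_zero, Finset.filter_eq_empty_iff]
  rintro ⟨p, q⟩ _
  rintro ⟨h1, h2⟩
  exact absurd h2 (by simpa using h1.asymm)

lemma swap_inversions {n : ℕ} (π : Equiv.Perm (Fin n)) {i j : Fin n}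
    (hij : (i : ℕ) + 1 = j) (hd : π j < π i) :
    inversions (π * Equiv.swap i j) + 1 = inversions π := by
  classical
  have hijlt : i < j := by rw [Fin.lt_def]; omega
  set s := Equiv.swap i j with hs
  set σ := π * s with hσ
  have hσap : ∀ k, σ k = π (s k) := fun k => rfl
  set S : Equiv.Perm (Fin n) → Finset (Fin n × Fin n) := fun ρ =>
    (Finset.univ.filter fun p : Fin n × Fin n => p.1 < p.2 ∧ ρ p.2 < ρ p.1) with hS
  have hmem : (i, j) ∈ S π := by
    simp only [hS, Finset.mem_filter, Finset.mem_univ, true_and]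
    exact ⟨hijlt, hd⟩
  have hcard : (S σ).card = ((S π).erase (i, j)).card := by
    apply Finset.card_bij' (fun p _ => (s p.1, s p.2)) (fun p _ => (s p.1, s p.2))
    · rintro ⟨p, q⟩ hpq
      simp only [hS, Finset.mem_filter, Finset.mem_univ, true_and] at hpq
      obtain ⟨h1, h2⟩ := hpq
      have hne : ¬(p = i ∧ q = j) := by
        rintro ⟨rfl, rfl⟩
        rw [hσap, hσap] at h2
        rw [hs] at h2
        rw [Equiv.swap_apply_left, Equiv.swap_apply_right] at h2
        exact absurd h2 (not_lt.2 hd.le)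
      rw [Finset.mem_erase]
      constructor
      · intro h
        rw [Prod.ext_iff] at h
        obtain ⟨ha, hb⟩ := h
        have hp : p = j := by
          have := congrArg s ha
          rwa [hs, Equiv.swap_apply_self, Equiv.swap_apply_left] at this
        have hq : q = i := by
          have := congrArg s hb
          rwa [hs, Equiv.swap_apply_self, Equiv.swap_apply_right] at this
        subst hp; subst hq
        exact absurd h1 (not_lt.2 hijlt.le)
      · simp only [hS, Finset.mem_filter, Finset.mem_univ, true_and]
        refine ⟨swap_lt hij h1 hne, ?_⟩
        rw [hσap, hσap] at h2
        exact h2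
    · rintro ⟨p, q⟩ hpq
      rw [Finset.mem_erase] at hpq
      obtain ⟨hne, hpq⟩ := hpq
      simp only [hS, Finset.mem_filter, Finset.mem_univ, true_and] at hpq
      obtain ⟨h1, h2⟩ := hpq
      have hne' : ¬(p = i ∧ q = j) := by
        rintro ⟨rfl, rfl⟩; exact hne rfl
      simp only [hS, Finset.mem_filter, Finset.mem_univ, true_and]
      refine ⟨swap_lt hij h1 hne', ?_⟩
      rw [hσap, hσap, hs, Equiv.swap_apply_self, Equiv.swap_apply_self]
      exact h2
    · rintro ⟨p, q⟩ _
      simp only [hs, Equiv.swap_apply_self]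
    · rintro ⟨p, q⟩ _
      simp only [hs, Equiv.swap_apply_self]
  have h1 : inversions σ = (S σ).card := rfl
  have h2 : inversions π = (S π).card := rfl
  have hpos : 0 < (S π).card := Finset.card_pos.2 ⟨_, hmem⟩
  rw [h1, hcard, Finset.card_erase_of_mem hmem]
  omega

lemma exists_descent {n : ℕ} (π : Equiv.Perm (Fin n)) (hπ : π ≠ 1) :
    ∃ i j : Fin n, (i : ℕ) + 1 = j ∧ π j < π i := by
  by_contra h
  push_neg at h
  have hmono : Monotone π := by
    have step : ∀ k : ℕ, ∀ i j : Fin n, (j : ℕ) = (i : ℕ) + k → π i ≤ π j := by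
      intro k
      induction k with
      | zero =>
        intro i j hk
        have : i = j := by ext; omega
        rw [this]
      | succ m ih =>
        intro i j hk
        have hj1 : (j : ℕ) - 1 < n := by omega
        set j' : Fin n := ⟨(j : ℕ) - 1, hj1⟩ with hj'
        have h1 : π i ≤ π j' := ih i j' (by simp only [hj']; omega)
        have h2 : π j' ≤ π j := h j' j (by simp only [hj']; omega)
        exact h1.trans h2
    intro i j hle
    exact step ((j : ℕ) - (i : ℕ)) i j (by omega)
  have hsm : StrictMono π := hmono.strictMono_of_injective π.injective
  haveI : WellFoundedLT (Fin n) := inferInstance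
  have hkey : Set.range (π : Fin n → Fin n) = Set.univ :=
    Set.range_eq_univ.2 π.surjective
  have hid : (π : Fin n → Fin n) = (id : Fin n → Fin n) :=
    (StrictMono.range_inj (β := Fin n) (γ := Fin n) hsm strictMono_id).1
      (by rw [hkey, Set.range_id])
  exact hπ (Equiv.ext fun k => congrFun hid k)

lemma flip_seq {n : ℕ} (x y : Fin n → ℝ) (hx : StrictMono x) (hy : StrictMono y) :
    ∀ m : ℕ, ∀ π : Equiv.Perm (Fin n), inversions π = m →
    (∃ f : ℕ → Equiv.Perm (Fin n), f 0 = π ∧ f (inversions π) = 1 ∧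
      ∀ k < inversions π, ∃ i j : Fin n, i < j ∧ (f k) j < (f k) i ∧
        (openSegment ℝ ((x i, 0) : ℝ × ℝ) ((y ((f k) i), 1) : ℝ × ℝ) ∩
          openSegment ℝ ((x j, 0) : ℝ × ℝ) ((y ((f k) j), 1) : ℝ × ℝ)).Nonempty ∧
        f (k + 1) = f k * Equiv.swap i j) := by
  intro m
  induction m with
  | zero =>
    intro π hm
    have hπ : π = 1 := by
      by_contra hne
      obtain ⟨i, j, hij, hd⟩ := exists_descent π hne
      have := swap_inversions π hij hd
      omega
    exact ⟨fun _ => 1, by rw [hπ], rfl, by intro k hk; omega⟩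
  | succ m ih =>
    intro π hm
    have hne : π ≠ 1 := by
      rintro rfl
      rw [inversions_one] at hm
      omega
    obtain ⟨i, j, hij, hd⟩ := exists_descent π hne
    have hcount := swap_inversions π hij hd
    set σ := π * Equiv.swap i j with hσ
    obtain ⟨f', hf0, hf1, hf2⟩ := ih σ (by omega)
    set f : ℕ → Equiv.Perm (Fin n) := fun k => Nat.casesOn k π (fun k' => f' k') with hf
    have hfs : ∀ k' : ℕ, f (k' + 1) = f' k' := fun _ => rfl
    refine ⟨f, rfl, ?_, ?_⟩
    · have h1 : inversions π = inversions σ + 1 := by omega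
      rw [h1, hfs]
      exact hf1
    · intro k hk
      rcases Nat.eq_zero_or_pos k with rfl | hkpos
      · refine ⟨i, j, by rw [Fin.lt_def]; omega, hd, ?_, ?_⟩
        · exact cross_lemma _ _ _ _ (hx (by rw [Fin.lt_def]; omega)) (hy hd)
        · rw [hfs 0, hf0, hσ]
          rfl
      · obtain ⟨k', rfl⟩ : ∃ k', k = k' + 1 := ⟨k - 1, by omega⟩
        obtain ⟨i', j', h1, h2, h3, h4⟩ := hf2 k' (by omega)
        exact ⟨i', j', h1, by rw [hfs]; exact h2, by rw [hfs]; exact h3,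
          by rw [hfs, hfs]; exact h4⟩


/-- In the two-horizontal-lines setting (`aᵢ = (xᵢ, 0)`, `bⱼ = (yⱼ, 1)`,
matched by a permutation `π`): if `π` is not the identity, there exist `i < j`
with `π i > π j` whose segments cross, such that flipping them yields the
matching of `π ∘ (i j)`, which has strictly fewer inversions.  Consequently
there is a flip sequence of length `inversions π` reaching the non-crossing
matching (of the identity permutation). -/
theorem two_lines_flip_sequence (n : ℕ) (x y : Fin n → ℝ)
    (hx : StrictMono x) (hy : StrictMono y) (π : Equiv.Perm (Fin n)) :
    (π ≠ 1 → ∃ i j : Fin n, i < j ∧ π j < π i ∧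
      (openSegment ℝ ((x i, 0) : ℝ × ℝ) ((y (π i), 1) : ℝ × ℝ) ∩
        openSegment ℝ ((x j, 0) : ℝ × ℝ) ((y (π j), 1) : ℝ × ℝ)).Nonempty ∧
      inversions (π * Equiv.swap i j) < inversions π) ∧
    (∃ f : ℕ → Equiv.Perm (Fin n), f 0 = π ∧ f (inversions π) = 1 ∧
      ∀ k < inversions π, ∃ i j : Fin n, i < j ∧ (f k) j < (f k) i ∧
        (openSegment ℝ ((x i, 0) : ℝ × ℝ) ((y ((f k) i), 1) : ℝ × ℝ) ∩
          openSegment ℝ ((x j, 0) : ℝ × ℝ) ((y ((f k) j), 1) : ℝ × ℝ)).Nonempty ∧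
        f (k + 1) = f k * Equiv.swap i j) := by
  constructor
  · intro hπ
    obtain ⟨i, j, hij, hd⟩ := exists_descent π hπ
    have hijlt : i < j := by rw [Fin.lt_def]; omega
    refine ⟨i, j, hijlt, hd, cross_lemma _ _ _ _ (hx hijlt) (hy hd), ?_⟩
    have := swap_inversions π hij hd
    omega
  · exact flip_seq x y hx hy (inversions π) π rfl
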